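/- Let X₁, …, Xₙ be (not necessarily independent) nonnegative random variables with E e^{X_i} ≤ C for each i, and let X₁* ≥ X₂* ≥ … ≥ Xₙ* be their non-increasing rearrangement. Then for every 1 ≤ k ≤ n: E √((1/k) Σ_{i=1}^k (X_i*)²) ≤ c₂ log(2Cn/k), for a universal constant c₂. -/

import Mathlib

open MeasureTheory Real Finset

lemma convexOn_exp_sqrt : ConvexOn ℝ (Set.Ici (1:ℝ)) (fun t => Real.exp (Real.sqrt t)) := by
  have hderiv : ∀ x ∈ Set.Ioi (0:ℝ), HasDerivAt (fun t => Real.exp (Real.sqrt t))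
      (Real.exp (Real.sqrt x) * (1 / (2 * Real.sqrt x))) x := by
    intro x hx
    exact (Real.hasDerivAt_sqrt (ne_of_gt hx)).exp
  have hderiv2 : ∀ x ∈ Set.Ioi (1:ℝ), HasDerivAt
      (fun t => Real.exp (Real.sqrt t) * (1 / (2 * Real.sqrt t)))
      (Real.exp (Real.sqrt x) * (1 / (2 * Real.sqrt x)) * (1 / (2 * Real.sqrt x))
        + Real.exp (Real.sqrt x) * (-(2 * (1 / (2 * Real.sqrt x))) / (2 * Real.sqrt x) ^ 2)) x := by
    intro x hx
    have hx0 : (0:ℝ) < x := lt_trans one_pos hx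
    have hs : (0:ℝ) < Real.sqrt x := Real.sqrt_pos.mpr hx0
    have h1 : HasDerivAt (fun t => Real.exp (Real.sqrt t))
        (Real.exp (Real.sqrt x) * (1 / (2 * Real.sqrt x))) x := hderiv x hx0
    have h2 : HasDerivAt (fun t => (2 * Real.sqrt t)⁻¹)
        (-(2 * (1 / (2 * Real.sqrt x))) / (2 * Real.sqrt x) ^ 2) x := by
      exact ((Real.hasDerivAt_sqrt (ne_of_gt hx0)).const_mul 2).inv (by positivity)
    have := h1.mul h2
    simpa [one_div, mul_comm, mul_assoc, mul_left_comm, add_comm, Pi.mul_def] using this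
  have hEq : ∀ x ∈ Set.Ioi (1:ℝ),
      deriv (fun t => Real.exp (Real.sqrt t))
        =ᶠ[nhds x] (fun t => Real.exp (Real.sqrt t) * (1 / (2 * Real.sqrt t))) := by
    intro x hx
    filter_upwards [Ioi_mem_nhds (lt_trans one_pos hx)] with y hy
    exact (hderiv y hy).deriv
  apply convexOn_of_deriv2_nonneg (convex_Ici 1)
      ((Real.continuous_exp.comp Real.continuous_sqrt).continuousOn)
  · rw [interior_Ici]
    intro x hx
    exact (hderiv x (Set.mem_Ioi.mpr (lt_trans one_pos (Set.mem_Ioi.mp hx)))).differentiableAt.differentiableWithinAt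
  · rw [interior_Ici]
    intro x hx
    have := (hderiv2 x hx).differentiableAt
    exact ((hEq x hx).differentiableAt_iff.mpr this).differentiableWithinAt
  · rw [interior_Ici]
    intro x hx
    have hkey : deriv^[2] (fun t => Real.exp (Real.sqrt t)) x
        = Real.exp (Real.sqrt x) * (1 / (2 * Real.sqrt x)) * (1 / (2 * Real.sqrt x))
          + Real.exp (Real.sqrt x) * (-(2 * (1 / (2 * Real.sqrt x))) / (2 * Real.sqrt x) ^ 2) := by
      have := (hEq x hx).deriv_eq
      simp only [Function.iterate_succ, Function.iterate_zero, Function.comp_apply, id_eq]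
      rw [this, (hderiv2 x hx).deriv]
    show 0 ≤ deriv^[2] (fun t => Real.exp (Real.sqrt t)) x
    rw [hkey]
    have hs1 : (1:ℝ) ≤ Real.sqrt x := Real.one_le_sqrt.mpr (le_of_lt hx)
    set s := Real.sqrt x with hsdef
    have hs0 : (0:ℝ) < s := lt_of_lt_of_le one_pos hs1
    have hrw : Real.exp s * (1 / (2 * s)) * (1 / (2 * s))
        + Real.exp s * (-(2 * (1 / (2 * s))) / (2 * s) ^ 2)
        = Real.exp s * (s - 1) / (4 * s ^ 3) := by
      field_simp
      ring
    rw [hrw]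
    have : 0 ≤ s - 1 := by linarith
    positivity

/-- Order statistics of ψ₁ random variables: if `E e^{X_i} ≤ C` and `(Y i)` is the
pointwise non-increasing rearrangement of the nonnegative `(X i)`, then
`E √((1/k) Σ_{i<k} (X_i*)²) ≤ c₂ log(2Cn/k)` for a universal constant `c₂`. -/
theorem psi1_order_statistics :
    ∃ c₂ : ℝ, 0 < c₂ ∧
      ∀ (Ω : Type) (mΩ : MeasureSpace Ω), IsProbabilityMeasure (volume : Measure Ω) →
      ∀ (n k : ℕ), 1 ≤ k → k ≤ n →
      ∀ (C : ℝ) (X Y : Fin n → Ω → ℝ),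
        (∀ i, Measurable (X i)) →
        (∀ i ω, 0 ≤ X i ω) →
        (∀ i, Integrable (fun ω => Real.exp (X i ω))) →
        (∀ i, ∫ ω, Real.exp (X i ω) ≤ C) →
        (∀ ω, ∃ σ : Equiv.Perm (Fin n),
          (∀ i, Y i ω = X (σ i) ω) ∧ Antitone fun i => Y i ω) →
        ∫ ω, Real.sqrt ((1 / (k : ℝ)) *
            ∑ i ∈ Finset.univ.filter (fun i : Fin n => (i : ℕ) < k), (Y i ω) ^ 2)
          ≤ c₂ * Real.log (2 * C * n / k) := by
  refine ⟨4, by norm_num, ?_⟩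
  intro Ω mΩ hprob n k hk hkn C X Y hXm hX0 hXint hXC hY
  have hn : 1 ≤ n := le_trans hk hkn
  have hk0 : (0:ℝ) < (k:ℝ) := by exact_mod_cast hk
  have hn0 : (0:ℝ) < (n:ℝ) := by exact_mod_cast hn
  have hkn' : (k:ℝ) ≤ (n:ℝ) := by exact_mod_cast hkn
  have i0 : Fin n := ⟨0, hn⟩
  have hC1 : (1:ℝ) ≤ C := by
    calc (1:ℝ) = ∫ _ω : Ω, (1:ℝ) := by simp
      _ ≤ ∫ ω, Real.exp (X i0 ω) := by
          apply integral_mono (integrable_const 1) (hXint i0)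
          intro ω; exact Real.one_le_exp (hX0 i0 ω)
      _ ≤ C := hXC i0
  have hC0 : (0:ℝ) < C := lt_of_lt_of_le one_pos hC1
  set Z : Ω → ℝ := fun ω => ∑ i : Fin n, Real.exp (X i ω) with hZ
  have hZpos : ∀ ω, 0 < Z ω := fun ω =>
    Finset.sum_pos (fun i _ => Real.exp_pos _) ⟨i0, Finset.mem_univ _⟩
  have hZint : Integrable Z := integrable_finset_sum _ (fun i _ => hXint i)
  have hZle : ∫ ω, Z ω ≤ n * C := by
    rw [hZ, integral_finset_sum _ (fun i _ => hXint i)]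
    calc ∑ i : Fin n, ∫ ω, Real.exp (X i ω) ≤ ∑ _i : Fin n, C :=
          Finset.sum_le_sum (fun i _ => hXC i)
      _ = n * C := by simp [mul_comm]
  set a : ℝ := n * C / k with ha
  have ha0 : 0 < a := by positivity
  have ha1 : 1 ≤ a := by
    rw [ha, le_div_iff₀ hk0, one_mul]
    calc (k:ℝ) ≤ n := hkn'
      _ ≤ n * C := le_mul_of_one_le_right hn0.le hC1
  set h : Ω → ℝ := fun ω => Real.log a + Z ω / (n * C) with hh
  have hhint : Integrable h := (integrable_const _).add (hZint.div_const _)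
  set F := Finset.univ.filter (fun i : Fin n => (i:ℕ) < k) with hF
  have hFcard : F.card = k := by
    rw [hF, Finset.card_filter,
      Fin.sum_univ_eq_sum_range (fun j => if j < k then (1:ℕ) else 0) n,
      ← Finset.card_filter]
    have h2 : (Finset.range n).filter (fun i => i < k) = Finset.range k := by
      ext i; simp; omega
    rw [h2, Finset.card_range]
  have hpt : ∀ ω, Real.sqrt ((1/(k:ℝ)) * ∑ i ∈ F, (Y i ω)^2) ≤ h ω := by
    intro ω
    obtain ⟨σ, hσ, -⟩ := hY ω
    have hY0 : ∀ i, 0 ≤ Y i ω := fun i => (hσ i) ▸ hX0 (σ i) ω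
    set S := (1/(k:ℝ)) * ∑ i ∈ F, (Y i ω)^2 with hS
    have hS0 : 0 ≤ S := mul_nonneg (by positivity)
      (Finset.sum_nonneg fun i _ => sq_nonneg _)
    have hjensen : Real.exp (Real.sqrt (1 + S))
        ≤ ∑ i ∈ F, (1/(k:ℝ)) * Real.exp (Real.sqrt (1 + (Y i ω)^2)) := by
      have hw : ∀ i ∈ F, (0:ℝ) ≤ 1/(k:ℝ) := fun _ _ => by positivity
      have hw1 : ∑ _i ∈ F, (1:ℝ)/(k:ℝ) = 1 := by
        rw [Finset.sum_const, hFcard, nsmul_eq_mul]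
        field_simp
      have hmem : ∀ i ∈ F, (1 + (Y i ω)^2) ∈ Set.Ici (1:ℝ) := fun i _ => by
        simp only [Set.mem_Ici, le_add_iff_nonneg_right]; positivity
      have hmain := convexOn_exp_sqrt.map_sum_le hw hw1 hmem
      have hsum : ∑ i ∈ F, (1/(k:ℝ)) • (1 + (Y i ω)^2) = 1 + S := by
        simp only [smul_eq_mul]
        rw [← Finset.mul_sum, Finset.sum_add_distrib, Finset.sum_const, hFcard,
          nsmul_eq_mul, mul_one, hS, mul_add]
        congr 1
        field_simp
      rw [hsum] at hmain
      simpa [smul_eq_mul] using hmain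
    have hstep : ∀ i ∈ F, Real.exp (Real.sqrt (1 + (Y i ω)^2))
        ≤ Real.exp 1 * Real.exp (Y i ω) := by
      intro i _
      rw [← Real.exp_add]
      apply Real.exp_le_exp.mpr
      have h1 : Real.sqrt (1 + (Y i ω)^2) ≤ Real.sqrt ((1 + Y i ω)^2) :=
        Real.sqrt_le_sqrt (by nlinarith [hY0 i])
      rwa [Real.sqrt_sq (by linarith [hY0 i])] at h1
    have himg : ∑ i ∈ F, Real.exp (Y i ω) ≤ Z ω := by
      calc ∑ i ∈ F, Real.exp (Y i ω) = ∑ i ∈ F, Real.exp (X (σ i) ω) := by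
            exact Finset.sum_congr rfl (fun i _ => by rw [hσ i])
        _ ≤ ∑ i : Fin n, Real.exp (X (σ i) ω) :=
            Finset.sum_le_sum_of_subset_of_nonneg (Finset.subset_univ F)
              (fun i _ _ => (Real.exp_pos _).le)
        _ = Z ω := Equiv.sum_comp σ (fun j => Real.exp (X j ω))
    have hchain : Real.exp (Real.sqrt (1 + S)) ≤ Real.exp 1 * (Z ω / k) := by
      calc Real.exp (Real.sqrt (1 + S))
          ≤ ∑ i ∈ F, (1/(k:ℝ)) * Real.exp (Real.sqrt (1 + (Y i ω)^2)) := hjensen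
        _ ≤ ∑ i ∈ F, (1/(k:ℝ)) * (Real.exp 1 * Real.exp (Y i ω)) :=
            Finset.sum_le_sum (fun i hi =>
              mul_le_mul_of_nonneg_left (hstep i hi) (by positivity))
        _ = (Real.exp 1 / k) * ∑ i ∈ F, Real.exp (Y i ω) := by
            rw [Finset.mul_sum]; exact Finset.sum_congr rfl (fun i _ => by ring)
        _ ≤ (Real.exp 1 / k) * Z ω := by
            apply mul_le_mul_of_nonneg_left himg (by positivity)
        _ = Real.exp 1 * (Z ω / k) := by ring
    have hlog : Real.sqrt (1 + S) ≤ 1 + Real.log (Z ω / k) := by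
      have hzk : 0 < Z ω / k := div_pos (hZpos ω) hk0
      have h1 := Real.log_le_log (Real.exp_pos _) hchain
      rwa [Real.log_exp, Real.log_mul (Real.exp_ne_zero 1) (ne_of_gt hzk),
        Real.log_exp] at h1
    have htan : Real.log (Z ω / k) ≤ Z ω / (n * C) + Real.log a - 1 := by
      have h2 : (0:ℝ) < (Z ω / k) / a := div_pos (div_pos (hZpos ω) hk0) ha0
      have h3 := Real.log_le_sub_one_of_pos h2
      rw [Real.log_div (ne_of_gt (div_pos (hZpos ω) hk0)) (ne_of_gt ha0)] at h3
      have h4 : (Z ω / k) / a = Z ω / (n * C) := by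
        rw [ha]; field_simp
      rw [h4] at h3
      linarith
    calc Real.sqrt S ≤ Real.sqrt (1 + S) := Real.sqrt_le_sqrt (by linarith)
      _ ≤ 1 + Real.log (Z ω / k) := hlog
      _ ≤ h ω := by rw [hh]; dsimp only; linarith
  have hint : ∫ ω, Real.sqrt ((1/(k:ℝ)) * ∑ i ∈ F, (Y i ω)^2) ≤ ∫ ω, h ω :=
    integral_mono_of_nonneg (Filter.Eventually.of_forall fun ω => Real.sqrt_nonneg _)
      hhint (Filter.Eventually.of_forall hpt)
  have hH : ∫ ω, h ω ≤ Real.log a + 1 := by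
    rw [hh]
    rw [integral_add (integrable_const _) (hZint.div_const _)]
    have h5 : ∫ _ω : Ω, Real.log a = Real.log a := by simp
    have h6 : ∫ ω, Z ω / (n * C) = (∫ ω, Z ω) / (n * C) := integral_div _ _
    rw [h5, h6]
    have h7 : (∫ ω, Z ω) / (n * C) ≤ 1 := by
      rw [div_le_one (by positivity)]
      exact hZle
    linarith
  have hfinal : Real.log a + 1 ≤ 4 * Real.log (2 * C * n / k) := by
    have h8 : 2 * C * (n:ℝ) / k = 2 * a := by rw [ha]; ring
    rw [h8, Real.log_mul two_ne_zero (ne_of_gt ha0)]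
    have h9 := Real.log_nonneg ha1
    have h10 : (0.6931471803:ℝ) < Real.log 2 := Real.log_two_gt_d9
    linarith
  calc ∫ ω, Real.sqrt ((1/(k:ℝ)) * ∑ i ∈ F, (Y i ω)^2) ≤ ∫ ω, h ω := hint
    _ ≤ Real.log a + 1 := hH
    _ ≤ 4 * Real.log (2 * C * n / k) := hfinal
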